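/- For all n ≥ 4, the integer 2ⁿ − n − 1 does not divide 2^{n−2}·(2 + λ·(n−3)) for λ = 0 and λ = 1; consequently there is no lattice tiling of ℤⁿ with the sphere S(n,n−2,1). -/

import Mathlib

private lemma aux_small' (m : ℕ) : m + 5 < 2^(m+3) := by
  induction m with
  | zero => norm_num
  | succ k ih => rw [pow_succ]; omega

private lemma aux_pow' (m : ℕ) : (m+4)*(m+7) < 2^(m+5) := by
  induction m with
  | zero => norm_num
  | succ k ih => rw [pow_succ]; nlinarith

private lemma key_div (m a B q : ℤ) (ha : 0 < a) (hsmall : m + 7 < 2*a)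
    (hB : B + (m+7) = 4*a) (hq : a*(m+5) = B*q)
    (hpow : (m+4)*(m+7) < 2*a) (hm : 0 ≤ m) (hqn : 0 ≤ q) : False := by
  have hBpos : 2*a < B := by linarith
  have hq1 : 1 ≤ q := by nlinarith
  have hq2 : 2 * q ≤ m + 4 := by
    by_contra hc
    push_neg at hc
    nlinarith [mul_le_mul_of_nonneg_left (show (m+5:ℤ) ≤ 2*q by linarith) (le_of_lt (show (0:ℤ) < B by linarith)), mul_lt_mul_of_pos_right hBpos (show (0:ℤ) < m+5 by linarith)]
  have hkey : (m+7)*q + a*(m+5) = 4*a*q := by linear_combination q * hB + hq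
  have h10 : m + 6 ≤ 4 * q := by
    nlinarith
  have h11 : a ≤ (m+7)*q := by
    nlinarith [mul_le_mul_of_nonneg_left h10 (le_of_lt ha)]
  nlinarith [mul_le_mul_of_nonneg_left hq2 (show (0:ℤ) ≤ m+7 by linarith)]

/-- For `n ≥ 4`, `2ⁿ − n − 1` divides neither `2^{n−2}·(2 + λ(n−3))` for `λ = 0`
nor for `λ = 1`; consequently there is no lattice tiling of `ℤⁿ` with the sphere
`S(n,n−2,1)`. -/
theorem no_perfect_code_ell_one (n : ℕ) (hn : 4 ≤ n) :
    (¬ (2 ^ n - n - 1 ∣ 2 ^ (n - 2) * (2 + 0 * (n - 3)))) ∧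
    (¬ (2 ^ n - n - 1 ∣ 2 ^ (n - 2) * (2 + 1 * (n - 3)))) ∧
    ¬ ∃ Λ : AddSubgroup (Fin n → ℤ),
        ∀ Z : Fin n → ℤ, ∃! X : Fin n → ℤ, X ∈ Λ ∧
          (∀ i, 0 ≤ Z i - X i ∧ Z i - X i ≤ (1 : ℤ)) ∧
          ({i | Z i - X i ≠ 0} : Set (Fin n)).ncard ≤ n - 2 := by
  refine ⟨?_, ?_, ?_⟩
  ·
    have h1 : n + 1 < 2 ^ (n-1) := by
      obtain ⟨m, rfl⟩ : ∃ m, n = m + 4 := ⟨n - 4, by omega⟩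
      have := aux_small' m
      have h : m + 4 - 1 = m + 3 := by omega
      rw [h]; omega
    have h2 : 2^n = 2 * 2^(n-1) := by rw [← pow_succ']; congr 1; omega
    intro ⟨q, hq⟩
    simp only [Nat.zero_mul, Nat.mul_zero, Nat.add_zero] at hq
    have h3 : 2^(n-2) * 2 = 2^(n-1) := by rw [← pow_succ]; congr 1; omega
    rw [h3] at hq
    have hpos : 0 < 2^(n-1) := Nat.pow_pos (by norm_num)
    have := Nat.le_of_dvd hpos ⟨q, hq⟩
    omega
  ·
    intro ⟨q, hq⟩
    have hD : 2 + 1 * (n-3) = n - 1 := by omega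
    rw [hD] at hq
    rcases Nat.lt_or_ge n 6 with h6 | h6
    · interval_cases n <;> norm_num at hq <;> omega
    · obtain ⟨m, rfl⟩ : ∃ m, n = m + 6 := ⟨n - 6, by omega⟩
      have e2 : m + 6 - 2 = m + 4 := by omega
      have e1 : m + 6 - 1 = m + 5 := by omega
      rw [e2, e1] at hq
      have hple : m + 7 ≤ 2^(m+6) := by
        have := aux_small' (m+3)
        have h : (2:ℕ)^(m+3+3) = 2^(m+6) := by ring_nf
        omega
      have hq' : (2:ℕ)^(m+4) * (m+5) = (2^(m+6) - (m+7)) * q := by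
        rw [hq]
        have : 2^(m+6) - (m+6) - 1 = 2^(m+6) - (m+7) := by omega
        rw [this]
      have hqZ := congrArg (Nat.cast : ℕ → ℤ) hq'
      push_cast [Nat.cast_sub hple] at hqZ
      have hsmallZ : (m:ℤ) + 7 < 2 * 2^(m+4) := by
        have := aux_small' (m+2)
        have h : (2:ℕ)^(m+2+3) = 2 * 2^(m+4) := by ring
        have : (m:ℕ) + 7 < 2 * 2^(m+4) := by omega
        exact_mod_cast this
      have hpowZ : ((m:ℤ)+4)*((m:ℤ)+7) < 2 * 2^(m+4) := by
        have h1 := aux_pow' m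
        have h : (2:ℕ)^(m+5) = 2 * 2^(m+4) := by ring
        have h2 : ((m:ℕ)+4)*((m:ℕ)+7) < 2 * 2^(m+4) := h1.trans_eq h
        exact_mod_cast h2
      exact key_div m (2^(m+4)) ((2:ℤ)^(m+6) - (m+7)) q (by positivity) hsmallZ
        (by ring)
        hqZ hpowZ (by positivity) (by positivity)
  · rintro ⟨Λ, hΛ⟩
    classical
    have hnpos : 0 < n := by omega
    -- cardinality helpers
    have hcard_univ : (Set.univ : Set (Fin n)).ncard = n := by
      rw [Set.ncard_univ, Nat.card_eq_fintype_card, Fintype.card_fin]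
    have hcompl1 : ∀ j : Fin n, ({i | i ≠ j} : Set (Fin n)).ncard = n - 1 := by
      intro j
      have h := Set.ncard_add_ncard_compl ({j} : Set (Fin n))
      have he : (({j} : Set (Fin n))ᶜ) = {i | i ≠ j} := by ext i; simp
      rw [he, Set.ncard_singleton, Nat.card_eq_fintype_card, Fintype.card_fin] at h
      omega
    have hcompl2 : ∀ a b : Fin n, a ≠ b → ({i | i ≠ a ∧ i ≠ b} : Set (Fin n)).ncard = n - 2 := by
      intro a b hab
      have h := Set.ncard_add_ncard_compl ({a, b} : Set (Fin n))
      have he : (({a, b} : Set (Fin n))ᶜ) = {i | i ≠ a ∧ i ≠ b} := by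
        ext i; simp [not_or]
      rw [he, Set.ncard_pair hab, Nat.card_eq_fintype_card, Fintype.card_fin] at h
      omega
    have hsub : ∀ s t : Set (Fin n), s ⊆ t → s.ncard ≤ t.ncard :=
      fun s t h => Set.ncard_le_ncard h (Set.toFinite t)
    -- Lemma A : disjointness
    have lemA : ∀ v : Fin n → ℤ, v ∈ Λ → v ≠ 0 →
        (∀ i, v i = -1 ∨ v i = 0 ∨ v i = 1) →
        ({i | v i = 1} : Set (Fin n)).ncard ≤ n - 2 →
        ({i | v i = -1} : Set (Fin n)).ncard ≤ n - 2 → False := by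
      intro v hvΛ hv0 hv hp hm
      set Z : Fin n → ℤ := fun i => if v i = 1 then 1 else 0 with hZdef
      have h0 : (0 : Fin n → ℤ) ∈ Λ ∧ (∀ i, 0 ≤ Z i - (0 : Fin n → ℤ) i ∧ Z i - (0 : Fin n → ℤ) i ≤ 1) ∧
          ({i | Z i - (0 : Fin n → ℤ) i ≠ 0} : Set (Fin n)).ncard ≤ n - 2 := by
        refine ⟨Λ.zero_mem, fun i => ?_, ?_⟩
        · simp only [Pi.zero_apply, sub_zero, hZdef]
          split <;> norm_num
        · have he : {i | Z i - (0 : Fin n → ℤ) i ≠ 0} = {i | v i = 1} := by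
            ext i
            simp only [hZdef, Set.mem_setOf_eq, Pi.zero_apply, sub_zero]
            split <;> simp_all
          rw [he]; exact hp
      have h1 : v ∈ Λ ∧ (∀ i, 0 ≤ Z i - v i ∧ Z i - v i ≤ 1) ∧
          ({i | Z i - v i ≠ 0} : Set (Fin n)).ncard ≤ n - 2 := by
        refine ⟨hvΛ, fun i => ?_, ?_⟩
        · rcases hv i with h | h | h <;> simp [hZdef, h]
        · have he : {i | Z i - v i ≠ 0} = {i | v i = -1} := by
            ext i
            rcases hv i with h | h | h <;> simp [hZdef, h]
          rw [he]; exact hm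
      exact hv0 ((hΛ Z).unique h1 h0)
    -- Lemma C : coverage at 1 - e_j
    have lemC : ∀ j : Fin n, (fun i => if i = j then (0:ℤ) else 1) ∈ Λ ∨
        (fun i => if i = j then (-1:ℤ) else 1) ∈ Λ := by
      intro j
      obtain ⟨X, ⟨hXΛ, hX1, hX2⟩, -⟩ := hΛ (fun i => if i = j then (0:ℤ) else 1)
      have hXj : X j = 0 ∨ X j = -1 := by
        have := hX1 j; simp at this; omega
      have hXi : ∀ i, i ≠ j → X i = 0 ∨ X i = 1 := by
        intro i hi; have := hX1 i; simp [hi] at this; omega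
      have hXone : ∃ i, i ≠ j ∧ X i = 1 := by
        by_contra hc
        push_neg at hc
        have hss : {i | i ≠ j} ⊆ {i | (if i = j then (0:ℤ) else 1) - X i ≠ 0} := by
          intro i hi
          have hij : i ≠ j := hi
          have h2 := hc i hij
          rcases hXi i hij with h | h
          · simp [hij, h]
          · exact absurd h h2
        have hle := hsub _ _ hss
        rw [hcompl1 j] at hle
        have hX2' : ({i | (if i = j then (0:ℤ) else 1) - X i ≠ 0} : Set (Fin n)).ncard ≤ n - 2 := hX2
        have := le_trans hle hX2'
        omega
      have hXne : X ≠ 0 := by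
        obtain ⟨i, -, hi⟩ := hXone
        intro h; rw [h] at hi; simp at hi
      by_cases hE : ∃ i, i ≠ j ∧ X i = 0
      · obtain ⟨i₀, hi₀j, hi₀⟩ := hE
        exact absurd (lemA X hXΛ hXne
          (fun i => by by_cases hi : i = j
                       · subst hi; rcases hXj with h | h <;> simp [h]
                       · rcases hXi i hi with h | h <;> simp [h])
          (by
            have hss : {i | X i = 1} ⊆ {i | i ≠ j ∧ i ≠ i₀} := by
              intro i hi
              simp only [Set.mem_setOf_eq] at hi ⊢
              constructor
              · rintro rfl; rcases hXj with h | h <;> omega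
              · rintro rfl; omega
            have := hsub _ _ hss
            rw [hcompl2 j i₀ (Ne.symm hi₀j)] at this
            exact this
          )
          (by
            have hss : {i | X i = -1} ⊆ ({j} : Set (Fin n)) := by
              intro i hi
              simp only [Set.mem_setOf_eq] at hi
              by_contra hij
              rcases hXi i hij with h | h <;> omega
            have := hsub _ _ hss
            rw [Set.ncard_singleton] at this
            omega)) not_false
      · push_neg at hE
        have hall : ∀ i, i ≠ j → X i = 1 := by
          intro i hi; rcases hXi i hi with h | h
          · exact absurd h (hE i hi)
          · exact h
        rcases hXj with h | h
        · left
          have he : X = fun i => if i = j then (0:ℤ) else 1 := by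
            funext i; by_cases hi : i = j
            · subst hi; simp [h]
            · simp [hi, hall i hi]
          rwa [← he]
        · right
          have he : X = fun i => if i = j then (-1:ℤ) else 1 := by
            funext i; by_cases hi : i = j
            · subst hi; simp [h]
            · simp [hi, hall i hi]
          rwa [← he]
    -- small ncard helper bounds
    have hle_singleton : ∀ (s : Set (Fin n)) (j : Fin n), s ⊆ {j} → s.ncard ≤ n - 2 := by
      intro s j h
      have := hsub _ _ h
      rw [Set.ncard_singleton] at this
      omega
    have hle_pair : ∀ (s : Set (Fin n)) (a b : Fin n), a ≠ b → s ⊆ {a, b} → s.ncard ≤ n - 2 := by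
      intro s a b hab h
      have := hsub _ _ h
      rw [Set.ncard_pair hab] at this
      omega
    have hle_compl : ∀ (s : Set (Fin n)) (a b : Fin n), a ≠ b → s ⊆ {i | i ≠ a ∧ i ≠ b} → s.ncard ≤ n - 2 := by
      intro s a b hab h
      have := hsub _ _ h
      rw [hcompl2 a b hab] at this
      omega
    -- Lemma B : coverage at the all-ones vector
    have lemB : (fun _ => (1:ℤ)) ∈ Λ ∨ ∃ k, (fun i => if i = k then (0:ℤ) else 1) ∈ Λ := by
      obtain ⟨X, ⟨hXΛ, hX1, hX2⟩, -⟩ := hΛ (fun _ => (1:ℤ))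
      have hXi : ∀ i, X i = 0 ∨ X i = 1 := by
        intro i; have := hX1 i; simp at this; omega
      have hXone : ∃ i, X i = 1 := by
        by_contra hc
        push_neg at hc
        have hss : (Set.univ : Set (Fin n)) ⊆ {i | (1:ℤ) - X i ≠ 0} := by
          intro i _
          rcases hXi i with h | h
          · simp [h]
          · exact absurd h (hc i)
        have hle := hsub _ _ hss
        rw [hcard_univ] at hle
        have hX2' : ({i | (1:ℤ) - X i ≠ 0} : Set (Fin n)).ncard ≤ n - 2 := hX2
        have := le_trans hle hX2'
        omega
      have hXne : X ≠ 0 := by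
        obtain ⟨i, hi⟩ := hXone
        intro h; rw [h] at hi; simp at hi
      by_cases hT : ∃ a b, a ≠ b ∧ X a = 0 ∧ X b = 0
      · obtain ⟨a, b, hab, ha, hb⟩ := hT
        exact absurd (lemA X hXΛ hXne
          (fun i => by rcases hXi i with h | h <;> simp [h])
          (by
            apply hle_compl _ a b hab
            intro i hi
            simp only [Set.mem_setOf_eq] at hi ⊢
            constructor
            · rintro rfl; omega
            · rintro rfl; omega)
          (by
            apply hle_singleton _ a
            intro i hi
            simp only [Set.mem_setOf_eq] at hi
            rcases hXi i with h | h <;> omega)) not_false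
      · push_neg at hT
        by_cases h0 : ∃ k, X k = 0
        · obtain ⟨k, hk⟩ := h0
          right; refine ⟨k, ?_⟩
          have he : X = fun i => if i = k then (0:ℤ) else 1 := by
            funext i
            by_cases hi : i = k
            · subst hi; simp [hk]
            · rcases hXi i with h | h
              · exact absurd hk (hT i k hi h)
              · simp [hi, h]
          rwa [← he]
        · push_neg at h0
          left
          have he : X = fun _ => (1:ℤ) := by
            funext i; rcases hXi i with h | h
            · exact absurd h (h0 i)
            · simp [h]
          rwa [← he]
    -- main case split
    rcases lemB with h1Λ | ⟨k, hkΛ⟩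
    · -- all-ones in Λ : derive w_j ∈ Λ for every j
      have hw : ∀ j : Fin n, (fun i => if i = j then (-1:ℤ) else 1) ∈ Λ := by
        intro j
        rcases lemC j with hu | hwj
        · exfalso
          have hv := Λ.sub_mem h1Λ hu
          refine lemA _ hv ?_ ?_ ?_ ?_
          · intro hz
            have := congrFun hz j
            simp [Pi.sub_apply] at this
          · intro i
            by_cases hi : i = j <;> simp [Pi.sub_apply, hi]
          · apply hle_singleton _ j
            intro i hi
            simp only [Set.mem_setOf_eq, Pi.sub_apply] at hi
            by_cases h : i = j
            · simp [h]
            · simp [h] at hi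
          · apply hle_singleton _ j
            intro i hi
            simp only [Set.mem_setOf_eq, Pi.sub_apply] at hi
            by_cases h : i = j <;> simp [h] at hi
        · exact hwj
      -- contradiction with v = w_a + w_b - 1
      have h0n : (0:ℕ) < n := by omega
      have h1n : (1:ℕ) < n := by omega
      set a : Fin n := ⟨0, h0n⟩
      set b : Fin n := ⟨1, h1n⟩
      have hab : a ≠ b := by simp [a, b, Fin.ext_iff]
      have hv := Λ.sub_mem (Λ.add_mem (hw a) (hw b)) h1Λ
      refine lemA _ hv ?_ ?_ ?_ ?_
      · intro hz
        have := congrFun hz a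
        simp [Pi.sub_apply, Pi.add_apply, hab] at this
      · intro i
        by_cases hia : i = a
        · subst hia; simp [Pi.sub_apply, Pi.add_apply, hab]
        · by_cases hib : i = b
          · subst hib; simp [Pi.sub_apply, Pi.add_apply, Ne.symm hab]
          · simp [Pi.sub_apply, Pi.add_apply, hia, hib]
      · apply hle_compl _ a b hab
        intro i hi
        simp only [Set.mem_setOf_eq, Pi.sub_apply, Pi.add_apply] at hi ⊢
        constructor
        · rintro rfl
          simp [hab] at hi
        · rintro rfl
          simp [Ne.symm hab] at hi
      · apply hle_pair _ a b hab
        intro i hi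
        simp only [Set.mem_setOf_eq, Pi.sub_apply, Pi.add_apply] at hi
        by_cases hia : i = a
        · simp [hia]
        · by_cases hib : i = b
          · simp [hib]
          · simp [hia, hib] at hi
    · -- u_k ∈ Λ : derive w_j ∈ Λ for j ≠ k
      have hw : ∀ j : Fin n, j ≠ k → (fun i => if i = j then (-1:ℤ) else 1) ∈ Λ := by
        intro j hjk
        rcases lemC j with hu | hwj
        · exfalso
          have hv := Λ.sub_mem hu hkΛ
          refine lemA _ hv ?_ ?_ ?_ ?_
          · intro hz
            have := congrFun hz j
            simp [Pi.sub_apply, hjk] at this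
          · intro i
            by_cases hij : i = j
            · subst hij; simp [Pi.sub_apply, hjk]
            · by_cases hik : i = k
              · subst hik; simp [Pi.sub_apply, Ne.symm hjk]
              · simp [Pi.sub_apply, hij, hik]
          · apply hle_singleton _ k
            intro i hi
            simp only [Set.mem_setOf_eq, Pi.sub_apply] at hi
            by_cases hij : i = j
            · subst hij; simp [hjk] at hi
            · by_cases hik : i = k
              · simp [hik]
              · simp [hij, hik] at hi
          · apply hle_singleton _ j
            intro i hi
            simp only [Set.mem_setOf_eq, Pi.sub_apply] at hi
            by_cases hij : i = j
            · simp [hij]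
            · by_cases hik : i = k
              · subst hik; simp [Ne.symm hjk] at hi
              · simp [hij, hik] at hi
        · exact hwj
      -- 1 + e_k ∈ Λ
      have hXpp : (fun i => if i = k then (2:ℤ) else 1) ∈ Λ := by
        obtain ⟨X, ⟨hXΛ, hX1, hX2⟩, -⟩ := hΛ (fun i => if i = k then (2:ℤ) else 1)
        have hX2' : ({i | (if i = k then (2:ℤ) else 1) - X i ≠ 0} : Set (Fin n)).ncard ≤ n - 2 := hX2
        have hXk : X k = 1 ∨ X k = 2 := by
          have := hX1 k; simp at this; omega
        have hXi : ∀ i, i ≠ k → X i = 0 ∨ X i = 1 := by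
          intro i hi; have := hX1 i; simp [hi] at this; omega
        have hXk2 : X k = 2 := by
          rcases hXk with h | h
          · exfalso
            have hv := Λ.sub_mem hXΛ hkΛ
            refine lemA _ hv ?_ ?_ ?_ ?_
            · intro hz
              have := congrFun hz k
              simp [Pi.sub_apply, h] at this
            · intro i
              by_cases hik : i = k
              · subst hik; simp [Pi.sub_apply, h]
              · rcases hXi i hik with h2 | h2 <;> simp [Pi.sub_apply, hik, h2]
            · apply hle_singleton _ k
              intro i hi
              simp only [Set.mem_setOf_eq, Pi.sub_apply] at hi
              by_cases hik : i = k
              · simp [hik]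
              · rcases hXi i hik with h2 | h2 <;> simp [hik, h2] at hi
            · have hss : {i | (X - fun i => if i = k then (0:ℤ) else 1) i = -1} ⊆
                  {i | (if i = k then (2:ℤ) else 1) - X i ≠ 0} := by
                intro i hi
                simp only [Set.mem_setOf_eq, Pi.sub_apply] at hi ⊢
                by_cases hik : i = k
                · subst hik; simp [h] at hi
                · rcases hXi i hik with h2 | h2 <;> simp [hik, h2] at hi ⊢
              exact le_trans (hsub _ _ hss) hX2'
          · exact h
        have hXall : ∀ i, i ≠ k → X i = 1 := by
          intro j hjk
          rcases hXi j hjk with h | h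
          · exfalso
            have hv := Λ.sub_mem hXΛ (hw j hjk)
            refine lemA _ hv ?_ ?_ ?_ ?_
            · intro hz
              have := congrFun hz k
              simp [Pi.sub_apply, Ne.symm hjk, hXk2] at this
            · intro i
              by_cases hik : i = k
              · subst hik; simp [Pi.sub_apply, Ne.symm hjk, hXk2]
              · by_cases hij : i = j
                · subst hij; simp [Pi.sub_apply, h]
                · rcases hXi i hik with h2 | h2 <;> simp [Pi.sub_apply, hik, hij, h2]
            · apply hle_pair _ k j (Ne.symm hjk)
              intro i hi
              simp only [Set.mem_setOf_eq, Pi.sub_apply] at hi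
              by_cases hik : i = k
              · simp [hik]
              · by_cases hij : i = j
                · simp [hij]
                · rcases hXi i hik with h2 | h2 <;> simp [hik, hij, h2] at hi
            · have hss : {i | (X - fun i => if i = j then (-1:ℤ) else 1) i = -1} ⊆
                  {i | (if i = k then (2:ℤ) else 1) - X i ≠ 0} := by
                intro i hi
                simp only [Set.mem_setOf_eq, Pi.sub_apply] at hi ⊢
                by_cases hik : i = k
                · subst hik; simp [Ne.symm hjk, hXk2] at hi
                · by_cases hij : i = j
                  · subst hij; simp [h] at hi
                  · rcases hXi i hik with h2 | h2 <;> simp [hik, hij, h2] at hi ⊢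
              exact le_trans (hsub _ _ hss) hX2'
          · exact h
        have he : X = fun i => if i = k then (2:ℤ) else 1 := by
          funext i
          by_cases hik : i = k
          · subst hik; simp [hXk2]
          · simp [hik, hXall i hik]
        rwa [← he]
      -- choose a b distinct, both ≠ k
      have h0n : (0:ℕ) < n := by omega
      have h1n : (1:ℕ) < n := by omega
      have h2n : (2:ℕ) < n := by omega
      have h3n : (3:ℕ) < n := by omega
      obtain ⟨a, b, hab, hak, hbk⟩ : ∃ a b : Fin n, a ≠ b ∧ a ≠ k ∧ b ≠ k := by
        refine ⟨if k = ⟨0, h0n⟩ then ⟨1, h1n⟩ else ⟨0, h0n⟩,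
                if k = ⟨2, h2n⟩ then ⟨3, h3n⟩ else ⟨2, h2n⟩, ?_, ?_, ?_⟩
        · split_ifs <;> simp [Fin.ext_iff]
        · split_ifs with h
          · rw [h]; simp [Fin.ext_iff]
          · exact fun hc => h hc.symm
        · split_ifs with h
          · rw [h]; simp [Fin.ext_iff]
          · exact fun hc => h hc.symm
      have hv := Λ.sub_mem (Λ.add_mem (hw a hak) (hw b hbk)) hXpp
      refine lemA _ hv ?_ ?_ ?_ ?_
      · intro hz
        have := congrFun hz a
        simp [Pi.sub_apply, Pi.add_apply, hab, hak] at this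
      · intro i
        by_cases hia : i = a
        · subst hia; simp [Pi.sub_apply, Pi.add_apply, hab, hak]
        · by_cases hib : i = b
          · subst hib; simp [Pi.sub_apply, Pi.add_apply, Ne.symm hab, hbk]
          · by_cases hik : i = k
            · subst hik; simp [Pi.sub_apply, Pi.add_apply, Ne.symm hak, Ne.symm hbk]
            · simp [Pi.sub_apply, Pi.add_apply, hia, hib, hik]
      · apply hle_compl _ a b hab
        intro i hi
        simp only [Set.mem_setOf_eq, Pi.sub_apply, Pi.add_apply] at hi ⊢
        constructor
        · rintro rfl
          simp [hab, hak] at hi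
        · rintro rfl
          simp [Ne.symm hab, hbk] at hi
      · apply hle_pair _ a b hab
        intro i hi
        simp only [Set.mem_setOf_eq, Pi.sub_apply, Pi.add_apply] at hi
        by_cases hia : i = a
        · simp [hia]
        · by_cases hib : i = b
          · simp [hib]
          · by_cases hik : i = k
            · subst hik; simp [Ne.symm hak, Ne.symm hbk] at hi
            · simp [hia, hib, hik] at hi
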